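/- For every n ≥ 2 and every x ∈ ℝ, the B-spline satisfies B_n(x) = (1/(n-1)!) ∑_{k=0}^{n} (-1)^k C(n,k) (x - k)_+^{n-1}, where (y)_+ = max{0, y} and C(n,k) is the binomial coefficient. -/

import Mathlib

open MeasureTheory

/-- The cardinal B-splines: `B 1` is the characteristic function of `[0,1)` and
`B n (x) = ∫_0^1 B (n-1) (x - t) dt` for `n ≥ 2`. -/
noncomputable def B : ℕ → ℝ → ℝ
  | 0, _ => 0
  | 1, x => if 0 ≤ x ∧ x < 1 then 1 else 0
  | n + 2, x => ∫ t in (0:ℝ)..1, B (n + 1) (x - t)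


lemma hasDerivAt_maxpow (m : ℕ) (hm : 1 ≤ m) (y : ℝ) :
    HasDerivAt (fun z : ℝ => (max 0 z) ^ (m + 1)) ((m + 1) * (max 0 y) ^ m) y := by
  rcases lt_trichotomy y 0 with h | h | h
  · have hev : (fun z : ℝ => (max 0 z) ^ (m + 1)) =ᶠ[nhds y] fun _ => (0 : ℝ) := by
      filter_upwards [eventually_lt_nhds h] with z hz
      simp [max_eq_left hz.le]
    have : HasDerivAt (fun _ : ℝ => (0:ℝ)) 0 y := hasDerivAt_const y 0
    have := this.congr_of_eventuallyEq hev
    simpa [max_eq_left h.le, zero_pow (by omega : m ≠ 0)] using this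
  · subst h
    rw [hasDerivAt_iff_tendsto_slope]
    have key : ∀ z : ℝ, z ≠ 0 → ‖slope (fun z : ℝ => (max 0 z) ^ (m + 1)) 0 z‖ ≤ |z| ^ m := by
      intro z hz0
      rw [slope_def_field]
      simp only [max_self, zero_pow (by omega : m + 1 ≠ 0), sub_zero, div_eq_mul_inv]
      rw [norm_mul, norm_inv]
      calc ‖(max 0 z) ^ (m+1)‖ * ‖z‖⁻¹ ≤ |z| ^ (m+1) * |z|⁻¹ := by
            gcongr
            rw [norm_pow]
            gcongr
            rw [Real.norm_eq_abs]
            rcases le_total z 0 with h | h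
            · simp [max_eq_left h, abs_nonneg]
            · simp [max_eq_right h, le_abs_self]
            exact (Real.norm_eq_abs z).symm.le
        _ = |z| ^ m := by
            rw [pow_succ, mul_assoc, mul_inv_cancel₀ (by simpa using hz0), mul_one]
    have htend : Filter.Tendsto (fun z : ℝ => |z| ^ m) (nhdsWithin 0 {(0:ℝ)}ᶜ) (nhds 0) := by
      have : Filter.Tendsto (fun z : ℝ => |z| ^ m) (nhds 0) (nhds 0) := by
        have : Filter.Tendsto (fun z : ℝ => |z| ^ m) (nhds 0) (nhds (|(0:ℝ)| ^ m)) :=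
          (continuous_abs.pow m).tendsto (0:ℝ)
        rwa [abs_zero, zero_pow (by omega : m ≠ 0)] at this
      exact this.mono_left nhdsWithin_le_nhds
    have hb : ∀ᶠ z in nhdsWithin 0 {(0:ℝ)}ᶜ, ‖slope (fun z : ℝ => (max 0 z) ^ (m + 1)) 0 z‖ ≤ |z| ^ m := by
      filter_upwards [self_mem_nhdsWithin] with z hz
      exact key z hz
    have := squeeze_zero_norm' hb htend
    simpa [max_self, zero_pow (by omega : m ≠ 0)] using this
  · have hev : (fun z : ℝ => (max 0 z) ^ (m + 1)) =ᶠ[nhds y] fun z => z ^ (m + 1) := by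
      filter_upwards [eventually_gt_nhds h] with z hz
      simp [max_eq_right hz.le]
    have := (hasDerivAt_pow (m + 1) y).congr_of_eventuallyEq hev
    simpa [max_eq_right h.le] using this

lemma integral_maxpow (m : ℕ) (hm : 1 ≤ m) (a : ℝ) :
    ∫ t in (0:ℝ)..1, (max 0 (a - t)) ^ m =
      ((max 0 a) ^ (m + 1) - (max 0 (a - 1)) ^ (m + 1)) / (m + 1) := by
  obtain ⟨p, rfl⟩ : ∃ p, m = p + 1 := ⟨m - 1, by omega⟩
  have hd : ∀ t ∈ Set.uIcc (0:ℝ) 1,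
      HasDerivAt (fun t : ℝ => -(max 0 (a - t)) ^ (p + 2) / (p + 2))
        ((max 0 (a - t)) ^ (p + 1)) t := by
    intro t _
    have h1 : HasDerivAt (fun t : ℝ => a - t) (-1) t := by
      exact ((hasDerivAt_const t a).sub (hasDerivAt_id' t)).congr_deriv (by norm_num)
    have h2 := (hasDerivAt_maxpow (p + 1) (by omega) (a - t)).comp t h1
    have h3 := (h2.neg).div_const ((p:ℝ) + 2)
    have hne : ((p:ℝ) + 2) ≠ 0 := by positivity
    refine h3.congr_deriv ?_
    push_cast
    field_simp
    ring
  have hcont : Continuous (fun t : ℝ => (max 0 (a - t)) ^ (p + 1)) :=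
    (continuous_const.max (continuous_const.sub continuous_id)).pow _
  rw [intervalIntegral.integral_eq_sub_of_hasDerivAt hd (hcont.intervalIntegrable 0 1)]
  push_cast
  ring


lemma pascal_key (n : ℕ) (g : ℕ → ℝ) :
    ∑ k ∈ Finset.range (n + 2), (-1:ℝ) ^ k * ((n+1).choose k : ℝ) * g k
    = ∑ k ∈ Finset.range (n + 1), (-1:ℝ) ^ k * (n.choose k : ℝ) * (g k - g (k + 1)) := by
  have e1 := Finset.sum_range_succ' (fun k => (-1:ℝ) ^ k * ((n+1).choose k : ℝ) * g k) (n + 1)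
  have e2 := Finset.sum_range_succ' (fun k => (-1:ℝ) ^ k * ((n).choose k : ℝ) * g k) (n + 1)
  have e3 := Finset.sum_range_succ (fun k => (-1:ℝ) ^ k * ((n).choose k : ℝ) * g k) (n + 1)
  rw [e1]
  simp only [Nat.choose_succ_succ, Nat.cast_add, Nat.choose_zero_right, Nat.cast_one, pow_zero,
    one_mul, mul_one] at *
  rw [Nat.choose_succ_self] at e3
  simp only [Nat.cast_zero, zero_mul, mul_zero, add_zero] at e3
  -- e2 : Sa (range n+2) = ∑_{k<n+1} (-1)^{k+1} C(n,k+1) g(k+1) + g 0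
  -- e3 : Sa (range n+2) = Sa (range n+1)
  have hsub : ∀ k, (-1:ℝ)^k * (n.choose k : ℝ) * (g k - g (k+1))
      = (-1:ℝ)^k * (n.choose k : ℝ) * g k - (-1:ℝ)^k * (n.choose k : ℝ) * g (k+1) := by
    intro k; ring
  simp only [hsub]
  rw [Finset.sum_sub_distrib, ← e3, e2]
  have step : ∀ k ∈ Finset.range (n+1),
      (-1:ℝ) ^ (k+1) * ((n.choose k : ℝ) + (n.choose k.succ : ℝ)) * g (k+1)
      = (-1:ℝ) ^ (k+1) * (n.choose (k+1) : ℝ) * g (k+1)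
        - (-1:ℝ) ^ k * (n.choose k : ℝ) * g (k+1) := by
    intro k _
    simp only [Nat.succ_eq_add_one]
    ring
  rw [Finset.sum_congr rfl step, Finset.sum_sub_distrib]
  ring


lemma B_two (x : ℝ) : B 2 x = max (min x 1 - max (x - 1) 0) 0 := by
  show (∫ t in (0:ℝ)..1, B 1 (x - t)) = _
  have h : ∀ t : ℝ, B 1 (x - t) = Set.indicator (Set.Ioc (x - 1) x) (fun _ => (1:ℝ)) t := by
    intro t
    simp only [B, Set.indicator_apply, Set.mem_Ioc]
    have : (0 ≤ x - t ∧ x - t < 1) ↔ (x - 1 < t ∧ t ≤ x) := by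
      constructor <;> rintro ⟨a, b⟩ <;> constructor <;> linarith
    rw [if_congr this rfl rfl]
  simp only [h]
  rw [intervalIntegral.integral_of_le zero_le_one,
    MeasureTheory.integral_indicator measurableSet_Ioc,
    MeasureTheory.setIntegral_const, measureReal_def, Measure.restrict_apply measurableSet_Ioc,
    Set.Ioc_inter_Ioc, Real.volume_Ioc, ENNReal.toReal_ofReal', smul_eq_mul, mul_one]

lemma B_aux (m : ℕ) : ∀ x : ℝ, B (m + 2) x =
    (1 / (Nat.factorial (m + 1) : ℝ)) * ∑ k ∈ Finset.range (m + 3),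
      (-1:ℝ) ^ k * ((m + 2).choose k : ℝ) * (max 0 (x - (k:ℝ))) ^ (m + 1) := by
  induction m with
  | zero =>
    intro x
    rw [B_two]
    norm_num [Finset.sum_range_succ]
    simp only [max_def, min_def]
    split_ifs <;> linarith
  | succ p ih =>
    intro x
    show (∫ t in (0:ℝ)..1, B (p + 2) (x - t)) = _
    simp only [ih]
    rw [intervalIntegral.integral_const_mul]
    rw [intervalIntegral.integral_finset_sum]
    swap
    · intro k _
      exact (continuous_const.mul ((continuous_const.max ((continuous_const.sub
        continuous_id).sub continuous_const)).pow _)).intervalIntegrable 0 1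
    have hint : ∀ k ∈ Finset.range (p + 3),
        (∫ t in (0:ℝ)..1, (-1:ℝ) ^ k * ((p + 2).choose k : ℝ) *
          (max 0 (x - t - (k:ℝ))) ^ (p + 1))
        = (-1:ℝ) ^ k * ((p + 2).choose k : ℝ) *
          (((max 0 (x - (k:ℝ))) ^ (p + 2) - (max 0 (x - (k:ℝ) - 1)) ^ (p + 2)) / (p + 2)) := by
      intro k _
      rw [intervalIntegral.integral_const_mul]
      congr 1
      have e : ∀ t : ℝ, x - t - (k:ℝ) = (x - (k:ℝ)) - t := fun t => by ring
      simp only [e]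
      rw [integral_maxpow (p + 1) (by omega) (x - (k:ℝ))]
      push_cast
      ring_nf
    rw [Finset.sum_congr rfl hint]
    have hpk := pascal_key (p + 2) (fun k => (max 0 (x - (k:ℝ))) ^ (p + 2))
    have hcast : ∀ k : ℕ, x - ((k:ℝ) + 1) = x - (k:ℝ) - 1 := fun k => by ring
    simp only [Nat.cast_add, Nat.cast_one, hcast] at hpk
    have hgoal : ∑ k ∈ Finset.range (p + 1 + 3),
        (-1:ℝ) ^ k * ((p + 1 + 2).choose k : ℝ) * (max 0 (x - (k:ℝ))) ^ (p + 1 + 1)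
        = ∑ k ∈ Finset.range (p + 3), (-1:ℝ) ^ k * ((p + 2).choose k : ℝ) *
          ((max 0 (x - (k:ℝ))) ^ (p + 2) - (max 0 (x - (k:ℝ) - 1)) ^ (p + 2)) := by
      simpa using hpk
    rw [hgoal, Finset.mul_sum, Finset.mul_sum]
    apply Finset.sum_congr rfl
    intro k _
    have hf1 : ((p + 1).factorial : ℝ) ≠ 0 := Nat.cast_ne_zero.mpr (Nat.factorial_ne_zero _)
    have hf2 : ((p + 1 + 1).factorial : ℝ) = ((p:ℝ) + 2) * ((p + 1).factorial : ℝ) := by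
      rw [Nat.factorial_succ]
      push_cast
      ring
    rw [hf2]
    have hp2 : ((p:ℝ) + 2) ≠ 0 := by positivity
    field_simp
    try ring
    try exact Or.inl trivial

theorem B_explicit (n : ℕ) (hn : 2 ≤ n) (x : ℝ) :
    B n x = (1 / (Nat.factorial (n - 1) : ℝ)) *
      ∑ k ∈ Finset.range (n + 1),
        (-1 : ℝ) ^ k * (n.choose k : ℝ) * (max 0 (x - (k:ℝ))) ^ (n - 1) := by
  obtain ⟨m, rfl⟩ : ∃ m, n = m + 2 := ⟨n - 2, by omega⟩
  simpa using B_aux m x
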